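/- For n ≥ 2, the maximum l2(n) of lcm(b1,...,bn)/((b1−1)···(bn−1)) over integers b1,...,bn ≥ 3 equals (3/2)·(4/3)·∏_{i=3}^n p_i/(p_i−1), and for all n ≥ 1 one has l2(n+1) ≤ l1(n) = ∏_{i=1}^n p_i/(p_i−1). -/

import Mathlib

/-- The ratio p/(p−1) for the i-th prime (0-indexed, so `primeRatio 0 = 2/1`). -/
noncomputable def primeRatio (i : ℕ) : ℚ :=
  (Nat.nth Nat.Prime i : ℚ) / ((Nat.nth Nat.Prime i : ℚ) - 1)

/-- l1(n) = ∏_{i=1}^n p_i/(p_i−1). -/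
noncomputable def l1 (n : ℕ) : ℚ := ∏ i ∈ Finset.range n, primeRatio i

/-- l2(n) = (3/2)·(4/3)·∏_{i=3}^n p_i/(p_i−1). -/
noncomputable def l2 (n : ℕ) : ℚ := (3 / 2) * (4 / 3) * ∏ i ∈ Finset.Ico 2 n, primeRatio i

/-- The quantity lcm(b₁,...,bₙ)/((b₁−1)···(bₙ−1)). -/
def lcmRatio {n : ℕ} (b : Fin n → ℕ) : ℚ :=
  (((Finset.univ.lcm b : ℕ) : ℚ)) / ∏ i, ((b i : ℚ) - 1)

open Finset

noncomputable def qr (p : ℕ) : ℚ := (p : ℚ) / ((p : ℚ) - 1)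

lemma qr_anti {x y : ℕ} (h2 : 2 ≤ x) (hxy : x ≤ y) : qr y ≤ qr x := by
  have hx : (2:ℚ) ≤ (x:ℚ) := by exact_mod_cast h2
  have hy : (x:ℚ) ≤ (y:ℚ) := by exact_mod_cast hxy
  rw [qr, qr, div_le_div_iff₀ (by linarith) (by linarith)]
  nlinarith

lemma one_le_qr {p : ℕ} (h2 : 2 ≤ p) : 1 ≤ qr p := by
  have hx : (2:ℚ) ≤ (p:ℚ) := by exact_mod_cast h2
  rw [qr, le_div_iff₀ (by linarith)]
  linarith

lemma qr_nonneg {p : ℕ} (h2 : 2 ≤ p) : 0 ≤ qr p := le_trans zero_le_one (one_le_qr h2)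

lemma two_le_nth_prime (i : ℕ) : 2 ≤ Nat.nth Nat.Prime i := (Nat.prime_nth_prime i).two_le

lemma primeRatio_eq (i : ℕ) : primeRatio i = qr (Nat.nth Nat.Prime i) := rfl

lemma one_le_primeRatio (i : ℕ) : 1 ≤ primeRatio i :=
  one_le_qr (two_le_nth_prime i)

lemma nth_prime_two_eq_five : Nat.nth Nat.Prime 2 = 5 := by
  have h5 : Nat.Prime 5 := by norm_num
  have hc : Nat.count Nat.Prime 5 = 2 := by decide
  have := Nat.nth_count h5
  rwa [hc] at this

lemma primeRatio_le_four_thirds {i : ℕ} (hi : 2 ≤ i) : primeRatio i ≤ 4/3 := by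
  have h5 : 5 ≤ Nat.nth Nat.Prime i := by
    rw [← nth_prime_two_eq_five]
    exact (Nat.nth_le_nth Nat.infinite_setOf_prime).mpr hi
  have := qr_anti (show 2 ≤ 4 by norm_num) (show 4 ≤ Nat.nth Nat.Prime i by omega)
  rw [primeRatio_eq]
  refine le_trans this ?_
  norm_num [qr]

lemma primeRatio_le_three_halves {i : ℕ} (hi : 1 ≤ i) : primeRatio i ≤ 3/2 := by
  have h3 : 3 ≤ Nat.nth Nat.Prime i := by
    rw [← Nat.nth_prime_one_eq_three]
    exact (Nat.nth_le_nth Nat.infinite_setOf_prime).mpr hi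
  have := qr_anti (show 2 ≤ 3 by norm_num) h3
  rw [primeRatio_eq]
  refine le_trans this ?_
  norm_num [qr]

lemma primeRatio_zero : primeRatio 0 = 2 := by
  rw [primeRatio_eq, Nat.nth_prime_zero_eq_two]; norm_num [qr]

lemma primeRatio_one : primeRatio 1 = 3/2 := by
  rw [primeRatio_eq, Nat.nth_prime_one_eq_three]; norm_num [qr]

/-- key counting lemma : a finset of odd primes has ratio-product dominated by
the first `card` odd prime ratios. -/
lemma prod_qr_le (S : Finset ℕ) (hS : ∀ p ∈ S, Nat.Prime p ∧ 3 ≤ p) :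
    ∏ p ∈ S, qr p ≤ ∏ j ∈ Finset.Ico 1 (S.card + 1), primeRatio j := by
  induction S using Finset.strongInduction with
  | _ S ih =>
    rcases S.eq_empty_or_nonempty with rfl | hne
    · simp
    · set m := S.max' hne with hm
      have hmS : m ∈ S := S.max'_mem hne
      obtain ⟨hmp, hm3⟩ := hS m hmS
      have hcard : 1 ≤ S.card := Finset.card_pos.mpr hne
      -- nth Prime S.card ≤ m
      have hsub : insert 2 S ⊆ (Finset.range (m+1)).filter (fun x => Nat.Prime x) := by
        intro p hp
        rcases Finset.mem_insert.mp hp with rfl | hp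
        · simp only [Finset.mem_filter, Finset.mem_range]
          exact ⟨by omega, Nat.prime_two⟩
        · obtain ⟨hpp, _⟩ := hS p hp
          simp only [Finset.mem_filter, Finset.mem_range]
          exact ⟨by have := S.le_max' p hp; omega, hpp⟩
      have h2S : (2:ℕ) ∉ S := fun h => by have := (hS 2 h).2; omega
      have hcount : S.card < Nat.count Nat.Prime (m+1) := by
        have := Finset.card_le_card hsub
        rw [Finset.card_insert_of_notMem h2S] at this
        rw [Nat.count_eq_card_filter_range]
        omega
      have hnth : Nat.nth Nat.Prime S.card ≤ m :=
        Nat.lt_succ_iff.mp (Nat.nth_lt_of_lt_count hcount)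
      have hqm : qr m ≤ primeRatio S.card := by
        rw [primeRatio_eq]
        exact qr_anti (two_le_nth_prime _) hnth
      -- induction on erase
      have herase : ∀ p ∈ S.erase m, Nat.Prime p ∧ 3 ≤ p := fun p hp =>
        hS p (Finset.mem_of_mem_erase hp)
      have hIH := ih (S.erase m) (Finset.erase_ssubset hmS) herase
      have hcarde : (S.erase m).card + 1 = S.card := by
        rw [Finset.card_erase_of_mem hmS]; omega
      rw [hcarde] at hIH
      calc ∏ p ∈ S, qr p = qr m * ∏ p ∈ S.erase m, qr p :=
            (Finset.mul_prod_erase S qr hmS).symm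
        _ ≤ primeRatio S.card * ∏ j ∈ Finset.Ico 1 S.card, primeRatio j := by
            apply mul_le_mul hqm hIH
            · exact Finset.prod_nonneg fun p hp => qr_nonneg (herase p hp).1.two_le
            · exact le_trans zero_le_one (one_le_primeRatio _)
        _ = ∏ j ∈ Finset.Ico 1 (S.card + 1), primeRatio j := by
            rw [Finset.prod_Ico_succ_top hcard, mul_comm]

/-- product of distinct prime powers each dividing z divides z -/
lemma prod_primePow_dvd (s : Finset ℕ) (hs : ∀ p ∈ s, Nat.Prime p) (e : ℕ → ℕ) (z : ℕ)
    (h : ∀ p ∈ s, p ^ e p ∣ z) : (∏ p ∈ s, p ^ e p) ∣ z := by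
  induction s using Finset.cons_induction with
  | empty => simpa using one_dvd z
  | cons a s ha ih =>
    rw [Finset.prod_cons]
    have hcop : Nat.Coprime (a ^ e a) (∏ p ∈ s, p ^ e p) := by
      apply Nat.Coprime.pow_left
      apply Nat.Coprime.prod_right
      intro p hp
      have hap : a ≠ p := fun hh => ha (hh ▸ hp)
      exact Nat.Coprime.pow_right _ ((Nat.coprime_primes (hs a (Finset.mem_cons_self a s))
        (hs p (Finset.mem_cons_of_mem hp))).mpr hap)
    exact hcop.mul_dvd_of_dvd_of_dvd (h a (Finset.mem_cons_self a s))
      (ih (fun p hp => hs p (Finset.mem_cons_of_mem hp)) (fun p hp => h p (Finset.mem_cons_of_mem hp)))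

lemma exists_pow_factorization_lcm_dvd {ι : Type*} (s : Finset ι) (f : ι → ℕ)
    (hf : ∀ i ∈ s, f i ≠ 0) (hs : s.Nonempty) (p : ℕ) :
    ∃ i ∈ s, p ^ ((s.lcm f).factorization p) ∣ f i := by
  induction hs using Finset.Nonempty.cons_induction with
  | singleton a => exact ⟨a, Finset.mem_singleton_self a, by
      simp only [Finset.lcm_singleton]
      rw [normalize_eq]
      exact Nat.ordProj_dvd _ _⟩
  | cons a s ha hne ih =>
    have hfa : f a ≠ 0 := hf a (Finset.mem_cons_self a s)
    have hfs : ∀ i ∈ s, f i ≠ 0 := fun i hi => hf i (Finset.mem_cons_of_mem hi)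
    have hlcm_ne : s.lcm f ≠ 0 := by
      rw [Ne, Finset.lcm_eq_zero_iff]
      rintro ⟨i, hi, hfi⟩
      exact hfs i hi hfi
    classical
    rw [Finset.cons_eq_insert, Finset.lcm_insert]
    have hfact : (lcm (f a) (s.lcm f)).factorization p
        = max ((f a).factorization p) ((s.lcm f).factorization p) := by
      rw [lcm_eq_nat_lcm, Nat.factorization_lcm hfa hlcm_ne]
      rfl
    rw [hfact]
    rcases le_total ((s.lcm f).factorization p) ((f a).factorization p) with hle | hle
    · refine ⟨a, Finset.mem_insert_self a s, ?_⟩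
      rw [max_eq_left hle]
      exact Nat.ordProj_dvd _ _
    · obtain ⟨i, hi, hdvd⟩ := ih hfs
      refine ⟨i, Finset.mem_insert_of_mem hi, ?_⟩
      rw [max_eq_right hle]
      exact hdvd


lemma l2_eq {n : ℕ} (hn : 2 ≤ n) : l2 n = (4/3) * ∏ j ∈ Finset.Ico 1 n, primeRatio j := by
  rw [l2, Finset.prod_eq_prod_Ico_succ_bot (show 1 < n by omega), primeRatio_one]
  ring

lemma div_le_qr {c b : ℕ} (h2 : 2 ≤ c) (hd : c ∣ b) (hb : 3 ≤ b) :
    (c:ℚ)/((b:ℚ)-1) ≤ qr c := by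
  have hcb : c ≤ b := Nat.le_of_dvd (by omega) hd
  have h2q : (2:ℚ) ≤ (c:ℚ) := by exact_mod_cast h2
  have hcbq : (c:ℚ) ≤ (b:ℚ) := by exact_mod_cast hcb
  rw [qr]
  have h1 : (0:ℚ) < (c:ℚ) - 1 := by linarith
  exact div_le_div_of_nonneg_left (by linarith) h1 (by linarith)

lemma upper_bound {n : ℕ} (hn : 2 ≤ n) (b : Fin n → ℕ) (hb : ∀ i, 3 ≤ b i) :
    lcmRatio b ≤ l2 n := by
  classical
  have hnne : (Finset.univ : Finset (Fin n)).Nonempty := ⟨⟨0, by omega⟩, mem_univ _⟩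
  set L := Finset.univ.lcm b with hLdef
  have hbne : ∀ i, b i ≠ 0 := fun i => by have := hb i; omega
  have hLne : L ≠ 0 := by
    rw [hLdef, Ne, Finset.lcm_eq_zero_iff]
    rintro ⟨i, _, h⟩
    exact hbne i h
  have hbdvdL : ∀ i, b i ∣ L := fun i => Finset.dvd_lcm (mem_univ i)
  have hex : ∀ p : ℕ, ∃ i : Fin n, p ^ (L.factorization p) ∣ b i := by
    intro p
    obtain ⟨i, _, h⟩ := exists_pow_factorization_lcm_dvd univ b (fun i _ => hbne i) hnne p
    exact ⟨i, h⟩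
  choose assign hassign using hex
  set c : Fin n → ℕ := fun i =>
    ∏ p ∈ L.primeFactors.filter (fun p => assign p = i), p ^ L.factorization p with hcdef
  have hprod_c : ∏ i, c i = L := by
    simp only [hcdef]
    rw [Finset.prod_fiberwise_of_maps_to (fun p _ => Finset.mem_univ (assign p))]
    have h := Nat.factorization_prod_pow_eq_self hLne
    rwa [Finsupp.prod, Nat.support_factorization] at h
  have hcdvd : ∀ i, c i ∣ b i := by
    intro i
    apply prod_primePow_dvd
    · intro p hp; exact Nat.prime_of_mem_primeFactors (Finset.mem_filter.mp hp).1
    · intro p hp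
      have hpi := (Finset.mem_filter.mp hp).2
      have := hassign p
      rwa [hpi] at this
  have hcne : ∀ i, c i ≠ 0 := fun i => ne_zero_of_dvd_ne_zero (hbne i) (hcdvd i)
  have hcfac : ∀ i q, q ∈ (c i).primeFactors →
      q ∈ L.primeFactors.filter (fun p => assign p = i) := by
    intro i q hq
    have hqp : q.Prime := Nat.prime_of_mem_primeFactors hq
    have hqdvd : q ∣ c i := Nat.dvd_of_mem_primeFactors hq
    simp only [hcdef] at hqdvd
    obtain ⟨p, hp, hqdvd'⟩ := hqp.prime.exists_mem_finset_dvd hqdvd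
    have hpp : p.Prime := Nat.prime_of_mem_primeFactors (Finset.mem_filter.mp hp).1
    have hqep : q = p := (Nat.prime_dvd_prime_iff_eq hqp hpp).mp (hqp.dvd_of_dvd_pow hqdvd')
    rwa [hqep]
  -- terms
  set t : Fin n → ℚ := fun i => (c i : ℚ) / ((b i : ℚ) - 1) with htdef
  have hb2 : ∀ i, (2:ℚ) ≤ (b i : ℚ) - 1 := by
    intro i
    have : (3:ℚ) ≤ (b i : ℚ) := by exact_mod_cast hb i
    linarith
  have hration : lcmRatio b = ∏ i, t i := by
    have hcast : ((L : ℕ) : ℚ) = ∏ i, (c i : ℚ) := by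
      rw [← hprod_c]; push_cast; rfl
    unfold lcmRatio
    rw [← hLdef, hcast, htdef, Finset.prod_div_distrib]
  set g : Fin n → ℚ := fun i =>
    if 2 ∣ c i then 4/3 else if c i = 1 then 1 else qr ((c i).minFac) with hgdef
  have ht_nonneg : ∀ i, 0 ≤ t i := by
    intro i
    apply div_nonneg (Nat.cast_nonneg _)
    have := hb2 i; linarith
  have htg : ∀ i, t i ≤ g i := by
    intro i
    simp only [htdef, hgdef]
    by_cases h2 : 2 ∣ c i
    · rw [if_pos h2]
      by_cases hc2 : c i = 2
      · -- show b i ≥ 6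
        have h2mem : 2 ∈ (c i).primeFactors :=
          Nat.mem_primeFactors.mpr ⟨Nat.prime_two, h2, hcne i⟩
        have h2fib := hcfac i 2 h2mem
        have hdvd2 : 2 ^ L.factorization 2 ∣ c i := by
          simp only [hcdef]
          exact Finset.dvd_prod_of_mem _ h2fib
        rw [hc2] at hdvd2
        have hvle : L.factorization 2 ≤ 1 := by
          by_contra hgt
          push_neg at hgt
          have h4 : (4:ℕ) ≤ 2 ^ L.factorization 2 := by
            calc (4:ℕ) = 2^2 := by norm_num
            _ ≤ 2 ^ L.factorization 2 := Nat.pow_le_pow_right (by norm_num) hgt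
          have := Nat.le_of_dvd (by norm_num) hdvd2
          omega
        have hbfac : (b i).factorization 2 ≤ 1 := by
          have hle := (Nat.factorization_le_iff_dvd (hbne i) hLne).mpr (hbdvdL i)
          exact le_trans (Finsupp.le_def.mp hle 2) hvle
        have h4 : ¬ ((2:ℕ)^2 ∣ b i) := by
          rw [Nat.Prime.pow_dvd_iff_le_factorization Nat.prime_two (hbne i)]
          omega
        have h2b : 2 ∣ b i := hc2 ▸ hcdvd i
        have hb6 : 6 ≤ b i := by
          have hb3 := hb i
          obtain ⟨k, hk⟩ := h2b
          rcases Nat.lt_or_ge (b i) 6 with hlt | hge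
          · exfalso
            apply h4
            have hb4 : b i = 4 := by omega
            rw [hb4]
            norm_num
          · exact hge
        have hb6q : (6:ℚ) ≤ (b i : ℚ) := by exact_mod_cast hb6
        rw [hc2]
        calc ((2:ℕ):ℚ)/((b i:ℚ)-1) ≤ 2/5 := by
              apply div_le_div_of_nonneg_left (by norm_num) (by norm_num)
              push_cast
              linarith
          _ ≤ 4/3 := by norm_num
      · have hc4 : 4 ≤ c i := by
          obtain ⟨k, hk⟩ := h2
          have := hcne i
          omega
        calc (c i:ℚ)/((b i:ℚ)-1) ≤ qr (c i) := div_le_qr (by omega) (hcdvd i) (hb i)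
          _ ≤ qr 4 := qr_anti (by norm_num) hc4
          _ = 4/3 := by norm_num [qr]
    · rw [if_neg h2]
      by_cases hc1 : c i = 1
      · rw [if_pos hc1, hc1]
        rw [div_le_one (by have := hb2 i; linarith)]
        have := hb2 i
        push_cast
        linarith
      · rw [if_neg hc1]
        have hc2le : 2 ≤ c i := by have := hcne i; omega
        calc (c i:ℚ)/((b i:ℚ)-1) ≤ qr (c i) := div_le_qr hc2le (hcdvd i) (hb i)
          _ ≤ qr ((c i).minFac) :=
              qr_anti (Nat.minFac_prime hc1).two_le (Nat.minFac_le (Nat.pos_of_ne_zero (hcne i)))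
  -- sets
  set T := univ.filter (fun i => ¬ 2 ∣ c i ∧ c i ≠ 1) with hTdef
  set E := univ.filter (fun i : Fin n => 2 ∣ c i) with hEdef
  have hassign2 : ∀ k ∈ E, assign 2 = k := by
    intro k hk
    have h2c : 2 ∣ c k := (Finset.mem_filter.mp hk).2
    have h2mem : 2 ∈ (c k).primeFactors := Nat.mem_primeFactors.mpr ⟨Nat.prime_two, h2c, hcne k⟩
    exact (Finset.mem_filter.mp (hcfac k 2 h2mem)).2
  have hE1 : E.card ≤ 1 :=
    Finset.card_le_one.mpr (fun i hi j hj => by rw [← hassign2 i hi, ← hassign2 j hj])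
  have hTE : T.card + E.card ≤ n := by
    have hdisj : Disjoint T E := by
      rw [Finset.disjoint_left]
      intro i hiT hiE
      exact (Finset.mem_filter.mp hiT).2.1 (Finset.mem_filter.mp hiE).2
    have hle := Finset.card_le_card (Finset.subset_univ (T ∪ E))
    rw [Finset.card_union_of_disjoint hdisj] at hle
    simpa using hle
  have hsplit1 : ∏ i, g i = (∏ i ∈ E, g i) * ∏ i ∈ univ.filter (fun i => ¬ 2 ∣ c i), g i := by
    rw [hEdef, Finset.prod_filter_mul_prod_filter_not]
  have hE43 : ∏ i ∈ E, g i = (4/3 : ℚ) ^ E.card := by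
    rw [Finset.prod_congr rfl (fun i hi => ?_), Finset.prod_const]
    simp only [hgdef]
    rw [if_pos (Finset.mem_filter.mp hi).2]
  have hsplit2 : ∏ i ∈ univ.filter (fun i => ¬ 2 ∣ c i), g i = ∏ i ∈ T, g i := by
    rw [← Finset.prod_filter_mul_prod_filter_not (univ.filter (fun i => ¬ 2 ∣ c i))
      (fun i => c i ≠ 1) g]
    rw [Finset.filter_filter, Finset.filter_filter]
    have hone : ∏ i ∈ univ.filter (fun i => ¬2 ∣ c i ∧ ¬ c i ≠ 1), g i = 1 := by
      apply Finset.prod_eq_one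
      intro i hi
      obtain ⟨h2, h1⟩ := (Finset.mem_filter.mp hi).2
      simp only [hgdef]
      rw [if_neg h2, if_pos (not_not.mp h1)]
    rw [hone, mul_one, hTdef]
  have hTqr : ∏ i ∈ T, g i = ∏ i ∈ T, qr ((c i).minFac) := by
    apply Finset.prod_congr rfl
    intro i hi
    obtain ⟨h2, h1⟩ := (Finset.mem_filter.mp hi).2
    simp only [hgdef]
    rw [if_neg h2, if_neg h1]
  set S := T.image (fun i => (c i).minFac) with hSdef
  have hminfacassign : ∀ k ∈ T, assign ((c k).minFac) = k := by
    intro k hk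
    have hk1 : c k ≠ 1 := (Finset.mem_filter.mp hk).2.2
    have hmem : (c k).minFac ∈ (c k).primeFactors :=
      Nat.mem_primeFactors.mpr ⟨Nat.minFac_prime hk1, Nat.minFac_dvd _, hcne k⟩
    exact (Finset.mem_filter.mp (hcfac k _ hmem)).2
  have hSprod : ∏ i ∈ T, qr ((c i).minFac) = ∏ p ∈ S, qr p := by
    rw [hSdef]
    rw [Finset.prod_image
      (fun i hi j hj hij => by rw [← hminfacassign i hi, ← hminfacassign j hj, hij])]
  have hScard : S.card = T.card := Finset.card_image_of_injOn
    (fun i hi j hj hij => by rw [← hminfacassign i hi, ← hminfacassign j hj, hij])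
  have hSprops : ∀ p ∈ S, Nat.Prime p ∧ 3 ≤ p := by
    intro p hp
    obtain ⟨i, hi, rfl⟩ := Finset.mem_image.mp hp
    obtain ⟨h2, h1⟩ := (Finset.mem_filter.mp hi).2
    have hprime := Nat.minFac_prime h1
    refine ⟨hprime, ?_⟩
    have hne2 : (c i).minFac ≠ 2 := fun heq => h2 (heq ▸ Nat.minFac_dvd (c i))
    have := hprime.two_le
    omega
  have hSle := prod_qr_le S hSprops
  have hnonnegIco : ∀ m : ℕ, (0:ℚ) ≤ ∏ j ∈ Finset.Ico 1 m, primeRatio j :=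
    fun m => Finset.prod_nonneg (fun j _ => le_trans zero_le_one (one_le_primeRatio j))
  have honele : ∀ k m : ℕ, 1 ≤ k → k ≤ m →
      ∏ j ∈ Finset.Ico 1 k, primeRatio j ≤ ∏ j ∈ Finset.Ico 1 m, primeRatio j := by
    intro k m h1k hkm
    rw [← Finset.prod_Ico_consecutive primeRatio h1k hkm]
    have hone : (1:ℚ) ≤ ∏ j ∈ Finset.Ico k m, primeRatio j := by
      have hh := Finset.prod_le_prod (s := Finset.Ico k m) (f := fun _ => (1:ℚ))
        (g := primeRatio) (fun i _ => zero_le_one) (fun i _ => one_le_primeRatio i)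
      simpa using hh
    exact le_mul_of_one_le_right (hnonnegIco k) hone
  have hgoal : ∏ i, g i ≤ l2 n := by
    rw [hsplit1, hE43, hsplit2, hTqr, hSprod, l2_eq hn]
    rcases Nat.le_one_iff_eq_zero_or_eq_one.mp hE1 with h0 | h1
    · rw [h0, pow_zero, one_mul]
      calc ∏ p ∈ S, qr p ≤ ∏ j ∈ Finset.Ico 1 (S.card + 1), primeRatio j := hSle
        _ ≤ ∏ j ∈ Finset.Ico 1 (n + 1), primeRatio j := honele _ _ (by omega) (by have h1 := hScard; have h2 := hTE; omega)
        _ = (∏ j ∈ Finset.Ico 1 n, primeRatio j) * primeRatio n :=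
            Finset.prod_Ico_succ_top (by omega) _
        _ ≤ (∏ j ∈ Finset.Ico 1 n, primeRatio j) * (4/3) :=
            mul_le_mul_of_nonneg_left (primeRatio_le_four_thirds hn) (hnonnegIco n)
        _ = 4/3 * ∏ j ∈ Finset.Ico 1 n, primeRatio j := mul_comm _ _
    · rw [h1, pow_one]
      have hs : S.card + 1 ≤ n := by have h1 := hScard; have h2 := hTE; omega
      apply mul_le_mul_of_nonneg_left _ (by norm_num : (0:ℚ) ≤ 4/3)
      exact le_trans hSle (honele _ _ (by omega) hs)
  calc lcmRatio b = ∏ i, t i := hration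
    _ ≤ ∏ i, g i := Finset.prod_le_prod (fun i _ => ht_nonneg i) (fun i _ => htg i)
    _ ≤ l2 n := hgoal

lemma coprime_prod_dvd {ι : Type*} (s : Finset ι) (f : ι → ℕ)
    (hcop : ∀ i ∈ s, ∀ j ∈ s, i ≠ j → Nat.Coprime (f i) (f j)) (z : ℕ)
    (h : ∀ i ∈ s, f i ∣ z) : (∏ i ∈ s, f i) ∣ z := by
  induction s using Finset.cons_induction with
  | empty => simpa using one_dvd z
  | cons a s ha ih =>
    rw [Finset.prod_cons]
    have hc : Nat.Coprime (f a) (∏ i ∈ s, f i) := by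
      apply Nat.Coprime.prod_right
      intro i hi
      exact hcop a (Finset.mem_cons_self a s) i (Finset.mem_cons_of_mem hi)
        (fun hh => ha (hh ▸ hi))
    exact hc.mul_dvd_of_dvd_of_dvd (h a (Finset.mem_cons_self a s))
      (ih (fun i hi j hj hij => hcop i (Finset.mem_cons_of_mem hi) j (Finset.mem_cons_of_mem hj) hij)
        (fun i hi => h i (Finset.mem_cons_of_mem hi)))

lemma exists_opt {n : ℕ} (hn : 2 ≤ n) :
    ∃ b : Fin n → ℕ, (∀ i, 3 ≤ b i) ∧ lcmRatio b = l2 n := by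
  classical
  set B : ℕ → ℕ := fun k => if k = 0 then 3 else if k = 1 then 4 else Nat.nth Nat.Prime k
    with hBdef
  have hnth5 : ∀ k, 2 ≤ k → 5 ≤ Nat.nth Nat.Prime k := by
    intro k hk
    rw [← nth_prime_two_eq_five]
    exact (Nat.nth_le_nth Nat.infinite_setOf_prime).mpr hk
  have hB3 : ∀ k, 3 ≤ B k := by
    intro k
    simp only [hBdef]
    split_ifs with h0 h1
    · exact le_refl 3
    · norm_num
    · have : 2 ≤ k := by omega
      have := hnth5 k this
      omega
  have hkey : ∀ k l, k < l → Nat.Coprime (B k) (B l) := by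
    intro k l hkl
    simp only [hBdef]
    rcases Nat.lt_or_ge l 2 with hl2 | hl2
    · -- k = 0, l = 1
      have hk0 : k = 0 := by omega
      have hl1 : l = 1 := by omega
      subst hk0; subst hl1
      norm_num
    · have hlp := Nat.prime_nth_prime l
      rw [if_neg (by omega : l ≠ 0), if_neg (by omega : l ≠ 1)]
      rcases Nat.lt_or_ge k 2 with hk2 | hk2
      · rcases Nat.lt_or_ge k 1 with hk0 | hk1
        · have : k = 0 := by omega
          subst this
          rw [if_pos rfl]
          have h3 : (3:ℕ) = Nat.nth Nat.Prime 1 := Nat.nth_prime_one_eq_three.symm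
          rw [h3]
          exact (Nat.coprime_primes (Nat.prime_nth_prime 1) hlp).mpr
            (fun hh => by
              have := (Nat.nth_lt_nth Nat.infinite_setOf_prime (p := Nat.Prime)).mpr
                (show 1 < l by omega)
              omega)
        · have : k = 1 := by omega
          subst this
          rw [if_neg (by omega), if_pos rfl]
          have h4 : (4:ℕ) = 2^2 := by norm_num
          rw [h4]
          apply Nat.Coprime.pow_left
          exact (Nat.coprime_primes Nat.prime_two hlp).mpr
            (fun hh => by have := hnth5 l hl2; omega)
      · rw [if_neg (by omega : k ≠ 0), if_neg (by omega : k ≠ 1)]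
        exact (Nat.coprime_primes (Nat.prime_nth_prime k) hlp).mpr
          (fun hh => by
            have := (Nat.nth_lt_nth Nat.infinite_setOf_prime (p := Nat.Prime)).mpr hkl
            omega)
  have hcop : ∀ k l : ℕ, k ≠ l → Nat.Coprime (B k) (B l) := by
    intro k l hne
    rcases Nat.lt_or_ge k l with h | h
    · exact hkey k l h
    · exact (hkey l k (by omega)).symm
  refine ⟨fun i => B (i : ℕ), fun i => hB3 i, ?_⟩
  have hlcm : Finset.univ.lcm (fun i : Fin n => B (i:ℕ)) = ∏ i : Fin n, B (i:ℕ) := by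
    apply Nat.dvd_antisymm
    · apply Finset.lcm_dvd
      intro i _
      exact Finset.dvd_prod_of_mem _ (mem_univ i)
    · apply coprime_prod_dvd
      · intro i _ j _ hij
        exact hcop i j (fun hh => hij (Fin.ext hh))
      · intro i _
        exact Finset.dvd_lcm (mem_univ i)
  have hprodB : ∏ i : Fin n, B (i:ℕ) = ∏ k ∈ Finset.range n, B k :=
    Fin.prod_univ_eq_prod_range B n
  have hsplitB : ∏ k ∈ Finset.range n, B k
      = 12 * ∏ k ∈ Finset.Ico 2 n, Nat.nth Nat.Prime k := by
    have h12 : ∏ k ∈ Finset.range 2, B k = 12 := by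
      simp [hBdef, Finset.prod_range_succ]
    have hIco : ∏ k ∈ Finset.Ico 2 n, B k = ∏ k ∈ Finset.Ico 2 n, Nat.nth Nat.Prime k := by
      apply Finset.prod_congr rfl
      intro k hk
      have := (Finset.mem_Ico.mp hk).1
      simp only [hBdef]
      rw [if_neg (by omega), if_neg (by omega)]
    rw [← Finset.prod_range_mul_prod_Ico B hn, h12, hIco]
  have hden : ∏ i : Fin n, ((B (i:ℕ) : ℚ) - 1)
      = 6 * ∏ k ∈ Finset.Ico 2 n, ((Nat.nth Nat.Prime k : ℚ) - 1) := by
    rw [Fin.prod_univ_eq_prod_range (fun k => (B k : ℚ) - 1) n]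
    have h6 : ∏ k ∈ Finset.range 2, ((B k : ℚ) - 1) = 6 := by
      simp [hBdef, Finset.prod_range_succ]
      norm_num
    have hIco : ∏ k ∈ Finset.Ico 2 n, ((B k : ℚ) - 1)
        = ∏ k ∈ Finset.Ico 2 n, ((Nat.nth Nat.Prime k : ℚ) - 1) := by
      apply Finset.prod_congr rfl
      intro k hk
      have := (Finset.mem_Ico.mp hk).1
      simp only [hBdef]
      rw [if_neg (by omega), if_neg (by omega)]
    rw [← Finset.prod_range_mul_prod_Ico (fun k => (B k : ℚ) - 1) hn, h6, hIco]
  have hQne : ∀ k ∈ Finset.Ico 2 n, ((Nat.nth Nat.Prime k : ℚ) - 1) ≠ 0 := by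
    intro k _
    have := two_le_nth_prime k
    have h2 : (2:ℚ) ≤ (Nat.nth Nat.Prime k : ℚ) := by exact_mod_cast this
    intro hh
    linarith
  have hl2 : l2 n = 2 * ((∏ k ∈ Finset.Ico 2 n, (Nat.nth Nat.Prime k : ℚ))
      / ∏ k ∈ Finset.Ico 2 n, ((Nat.nth Nat.Prime k : ℚ) - 1)) := by
    rw [l2]
    have : ∏ i ∈ Finset.Ico 2 n, primeRatio i
        = (∏ k ∈ Finset.Ico 2 n, (Nat.nth Nat.Prime k : ℚ))
          / ∏ k ∈ Finset.Ico 2 n, ((Nat.nth Nat.Prime k : ℚ) - 1) := by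
      rw [← Finset.prod_div_distrib]
      rfl
    rw [this]
    ring
  rw [lcmRatio, hlcm, hprodB, hsplitB, hden, hl2]
  push_cast
  rw [mul_div_mul_comm]
  norm_num

lemma part2 {n : ℕ} (hn : 1 ≤ n) : l2 (n + 1) ≤ l1 n := by
  have h1 : l1 n = 2 * ∏ j ∈ Finset.Ico 1 n, primeRatio j := by
    rw [l1, Finset.range_eq_Ico, Finset.prod_eq_prod_Ico_succ_bot (by omega : 0 < n),
      primeRatio_zero]
  have h2 : l2 (n+1) = 2 * ∏ j ∈ Finset.Ico 2 (n+1), primeRatio j := by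
    rw [l2]; ring
  rw [h1, h2]
  apply mul_le_mul_of_nonneg_left _ (by norm_num)
  rw [Finset.prod_Ico_eq_prod_range, Finset.prod_Ico_eq_prod_range]
  simp only [show n + 1 - 2 = n - 1 from by omega]
  apply Finset.prod_le_prod
  · intro i _
    exact le_trans zero_le_one (one_le_primeRatio _)
  · intro i _
    rw [primeRatio_eq, primeRatio_eq]
    apply qr_anti (two_le_nth_prime _)
    exact (Nat.nth_le_nth Nat.infinite_setOf_prime).mpr (by omega)


theorem stmt11 :
    (∀ n : ℕ, 2 ≤ n →
      (∀ b : Fin n → ℕ, (∀ i, 3 ≤ b i) → lcmRatio b ≤ l2 n) ∧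
      (∃ b : Fin n → ℕ, (∀ i, 3 ≤ b i) ∧ lcmRatio b = l2 n)) ∧
    (∀ n : ℕ, 1 ≤ n → l2 (n + 1) ≤ l1 n) := by
  constructor
  · intro n hn
    exact ⟨fun b hb => upper_bound hn b hb, exists_opt hn⟩
  · intro n hn
    exact part2 hn
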